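/- arXiv:2108.04865 — 3 statements merged into one kernel-verified Lean document; each statement's English description precedes it below -/
import Mathlib

section
/- The IPW estimator IPW₁ with known propensity scores is unbiased for the population average potential outcome: E[ (1/n) Σ_i y_i(A_i, A_{N_i}) 1{A_i = a} π(A_{N_i};α) / f(A_i, A_{N_i} | Z_i, Z_{N_i}) ] = ȳ(a,α), where ȳ(a,α) = (1/n) Σ_i Σ_{a_N} y_i(a, a_N) π(a_N; α). -/
open Finset

/-- Number of exposed neighbors in an exposure vector. -/
def cnt {d : ℕ} (a : Fin d → Bool) : ℕ :=
  (Finset.univ.filter (fun j => a j = true)).card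

/-- Bernoulli allocation weight of a neighbor exposure vector under strategy α. -/
noncomputable def piN {d : ℕ} (α : ℝ) (a : Fin d → Bool) : ℝ :=
  α ^ cnt a * (1 - α) ^ (d - cnt a)

/-- Bernoulli weight of a single binary exposure under strategy α. -/
noncomputable def piI (α : ℝ) (b : Bool) : ℝ :=
  if b then α else 1 - α

/-- Binomial allocation weight for s exposed neighbors out of d under strategy α. -/
noncomputable def piB (α : ℝ) (d s : ℕ) : ℝ :=
  (d.choose s : ℝ) * α ^ s * (1 - α) ^ (d - s)

/-- The IPW₁ estimator with known propensity scores is unbiased for the population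
average potential outcome ȳ(a,α). -/
theorem ipw1_unbiased (n : ℕ) (hn : 0 < n) (d : Fin n → ℕ)
    (Ω : Type) [Fintype Ω] (P : Ω → ℝ) (hP : ∀ ω, 0 ≤ P ω) (hP1 : ∑ ω, P ω = 1)
    (A : Fin n → Ω → Bool) (AN : (i : Fin n) → Ω → (Fin (d i) → Bool))
    (f : (i : Fin n) → Bool → (Fin (d i) → Bool) → ℝ)
    (hfpos : ∀ i b v, 0 < f i b v)
    (hmarg : ∀ (i : Fin n) (b : Bool) (v : Fin (d i) → Bool),
      ∑ ω ∈ Finset.univ.filter (fun ω => A i ω = b ∧ AN i ω = v), P ω = f i b v)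
    (y : (i : Fin n) → Bool → (Fin (d i) → Bool) → ℝ)
    (a : Bool) (α : ℝ) (h0 : 0 ≤ α) (h1 : α ≤ 1) :
    ∑ ω, P ω * ((1 / n : ℝ) * ∑ i, y i (A i ω) (AN i ω) * (if A i ω = a then 1 else 0)
        * piN α (AN i ω) / f i (A i ω) (AN i ω))
      = (1 / n : ℝ) * ∑ i, ∑ v : Fin (d i) → Bool, y i a v * piN α v := by
  have key : ∀ i : Fin n,
      ∑ ω, P ω * (y i (A i ω) (AN i ω) * (if A i ω = a then 1 else 0)
        * piN α (AN i ω) / f i (A i ω) (AN i ω))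
      = ∑ v : Fin (d i) → Bool, y i a v * piN α v := by
    intro i
    have h1 : ∑ ω, P ω * (y i (A i ω) (AN i ω) * (if A i ω = a then 1 else 0)
        * piN α (AN i ω) / f i (A i ω) (AN i ω))
        = ∑ p : Bool × (Fin (d i) → Bool),
            ∑ ω ∈ Finset.univ.filter (fun ω => (A i ω, AN i ω) = p),
              P ω * (y i (A i ω) (AN i ω) * (if A i ω = a then 1 else 0)
                * piN α (AN i ω) / f i (A i ω) (AN i ω)) := by
      exact (Finset.sum_fiberwise _ (fun ω => (A i ω, AN i ω)) _).symm
    rw [h1]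
    have h2 : ∀ p : Bool × (Fin (d i) → Bool),
        ∑ ω ∈ Finset.univ.filter (fun ω => (A i ω, AN i ω) = p),
            P ω * (y i (A i ω) (AN i ω) * (if A i ω = a then 1 else 0)
              * piN α (AN i ω) / f i (A i ω) (AN i ω))
        = f i p.1 p.2 * (y i p.1 p.2 * (if p.1 = a then 1 else 0)
            * piN α p.2 / f i p.1 p.2) := by
      intro p
      have hfilter : Finset.univ.filter (fun ω => (A i ω, AN i ω) = p)
          = Finset.univ.filter (fun ω => A i ω = p.1 ∧ AN i ω = p.2) := by
        apply Finset.filter_congr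
        intro ω _
        simp [Prod.ext_iff]
      rw [hfilter]
      rw [Finset.sum_congr rfl (fun ω hω => ?_), ← Finset.sum_mul, hmarg]
      simp only [Finset.mem_filter] at hω
      rw [hω.2.1, hω.2.2]
    rw [Finset.sum_congr rfl (fun p _ => h2 p)]
    rw [Fintype.sum_prod_type]
    have h3 : ∀ (b : Bool) (v : Fin (d i) → Bool),
        f i b v * (y i b v * (if b = a then 1 else 0) * piN α v / f i b v)
        = if b = a then y i a v * piN α v else 0 := by
      intro b v
      by_cases hb : b = a
      · subst hb
        have := (hfpos i b v).ne'
        field_simp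
        simp
      · simp [hb]
    simp only [h3]
    rcases a with _ | _ <;> simp
  calc ∑ ω, P ω * ((1 / n : ℝ) * ∑ i, y i (A i ω) (AN i ω) * (if A i ω = a then 1 else 0)
        * piN α (AN i ω) / f i (A i ω) (AN i ω))
      = (1 / n : ℝ) * ∑ i, ∑ ω, P ω * (y i (A i ω) (AN i ω) * (if A i ω = a then 1 else 0)
        * piN α (AN i ω) / f i (A i ω) (AN i ω)) := by
        simp_rw [mul_left_comm (P _) (1 / n : ℝ), Finset.mul_sum]
        rw [Finset.sum_comm]
    _ = (1 / n : ℝ) * ∑ i, ∑ v : Fin (d i) → Bool, y i a v * piN α v := by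
        rw [Finset.sum_congr rfl (fun i _ => key i)]
end

section
/- Under stratified interference, the IPW₂ estimator with known propensity scores is unbiased: E[ (1/n) Σ_i y_i(A_i, S_i) 1{A_i = a} π(S_i;α) / f₂(A_i, S_i | Z_i, Z_{N_i}) ] = ȳ(a,α), where S_i = Σ_{j ∈ N_i} A_j, π(s;α) = C(d_i,s) α^s (1-α)^{d_i - s}, and ȳ(a,α) = (1/n) Σ_i Σ_{s=0}^{d_i} y_i(a,s) π(s;α). -/
open Finset

/-- Under stratified interference, the IPW₂ estimator with known propensity scores is
unbiased for ȳ(a,α). -/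
theorem ipw2_unbiased (n : ℕ) (hn : 0 < n) (d : Fin n → ℕ)
    (Ω : Type) [Fintype Ω] (P : Ω → ℝ) (hP : ∀ ω, 0 ≤ P ω) (hP1 : ∑ ω, P ω = 1)
    (A : Fin n → Ω → Bool) (S : Fin n → Ω → ℕ)
    (hS : ∀ i ω, S i ω ≤ d i)
    (f₂ : Fin n → Bool → ℕ → ℝ)
    (hfpos : ∀ i b s, s ≤ d i → 0 < f₂ i b s)
    (hmarg : ∀ (i : Fin n) (b : Bool) (s : ℕ), s ≤ d i →
      ∑ ω ∈ Finset.univ.filter (fun ω => A i ω = b ∧ S i ω = s), P ω = f₂ i b s)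
    (y : Fin n → Bool → ℕ → ℝ)
    (a : Bool) (α : ℝ) (h0 : 0 ≤ α) (h1 : α ≤ 1) :
    ∑ ω, P ω * ((1 / n : ℝ) * ∑ i, y i (A i ω) (S i ω) * (if A i ω = a then 1 else 0)
        * piB α (d i) (S i ω) / f₂ i (A i ω) (S i ω))
      = (1 / n : ℝ) * ∑ i, ∑ s ∈ Finset.range (d i + 1), y i a s * piB α (d i) s := by
  have key : ∀ i : Fin n,
      ∑ ω, P ω * (y i (A i ω) (S i ω) * (if A i ω = a then 1 else 0)
        * piB α (d i) (S i ω) / f₂ i (A i ω) (S i ω))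
      = ∑ s ∈ Finset.range (d i + 1), y i a s * piB α (d i) s := by
    intro i
    have hmap : ∀ ω ∈ (Finset.univ : Finset Ω),
        (A i ω, S i ω) ∈ (Finset.univ : Finset Bool) ×ˢ Finset.range (d i + 1) := by
      intro ω _
      simp [Finset.mem_product, Nat.lt_succ_iff, hS i ω]
    rw [← Finset.sum_fiberwise_of_maps_to hmap
      (fun ω => P ω * (y i (A i ω) (S i ω) * (if A i ω = a then 1 else 0)
        * piB α (d i) (S i ω) / f₂ i (A i ω) (S i ω)))]
    rw [Finset.sum_product]
    have fiber : ∀ (b : Bool) (s : ℕ), s ≤ d i →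
        ∑ ω ∈ Finset.univ.filter (fun ω => (A i ω, S i ω) = (b, s)),
          P ω * (y i (A i ω) (S i ω) * (if A i ω = a then 1 else 0)
            * piB α (d i) (S i ω) / f₂ i (A i ω) (S i ω))
        = f₂ i b s * (y i b s * (if b = a then 1 else 0)
            * piB α (d i) s / f₂ i b s) := by
      intro b s hs
      have e1 : ∑ ω ∈ Finset.univ.filter (fun ω => (A i ω, S i ω) = (b, s)),
          P ω * (y i (A i ω) (S i ω) * (if A i ω = a then 1 else 0)
            * piB α (d i) (S i ω) / f₂ i (A i ω) (S i ω))
          = ∑ ω ∈ Finset.univ.filter (fun ω => A i ω = b ∧ S i ω = s),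
            P ω * (y i b s * (if b = a then 1 else 0) * piB α (d i) s / f₂ i b s) := by
        apply Finset.sum_congr
        · ext ω; simp [Prod.ext_iff]
        · intro ω hω
          simp only [Finset.mem_filter] at hω
          rw [hω.2.1, hω.2.2]
      rw [e1, ← Finset.sum_mul, hmarg i b s hs]
    have hb : ∀ (b : Bool) (s : ℕ), s ≤ d i →
        f₂ i b s * (y i b s * (if b = a then 1 else 0) * piB α (d i) s / f₂ i b s)
        = if b = a then y i a s * piB α (d i) s else 0 := by
      intro b s hs
      by_cases hba : b = a
      · subst hba
        simp only [if_pos rfl, mul_one]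
        field_simp [(hfpos i b s hs).ne']
        simp
      · simp [hba]
    calc ∑ b : Bool, ∑ s ∈ Finset.range (d i + 1),
          ∑ ω ∈ Finset.univ.filter (fun ω => (A i ω, S i ω) = (b, s)),
            P ω * (y i (A i ω) (S i ω) * (if A i ω = a then 1 else 0)
              * piB α (d i) (S i ω) / f₂ i (A i ω) (S i ω))
        = ∑ b : Bool, ∑ s ∈ Finset.range (d i + 1),
            (if b = a then y i a s * piB α (d i) s else 0) := by
          refine Finset.sum_congr rfl fun b _ => Finset.sum_congr rfl fun s hs => ?_
          rw [fiber b s (Nat.lt_succ_iff.mp (Finset.mem_range.mp hs)),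
            hb b s (Nat.lt_succ_iff.mp (Finset.mem_range.mp hs))]
      _ = ∑ s ∈ Finset.range (d i + 1), y i a s * piB α (d i) s := by
          rw [Fintype.sum_bool]
          cases a <;> simp
  calc ∑ ω, P ω * ((1 / n : ℝ) * ∑ i, y i (A i ω) (S i ω) * (if A i ω = a then 1 else 0)
        * piB α (d i) (S i ω) / f₂ i (A i ω) (S i ω))
      = (1 / n : ℝ) * ∑ i, ∑ ω, P ω * (y i (A i ω) (S i ω) * (if A i ω = a then 1 else 0)
          * piB α (d i) (S i ω) / f₂ i (A i ω) (S i ω)) := by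
        have step : ∀ ω, P ω * ((1 / n : ℝ) * ∑ i, y i (A i ω) (S i ω)
            * (if A i ω = a then 1 else 0) * piB α (d i) (S i ω) / f₂ i (A i ω) (S i ω))
            = ∑ i, (1 / n : ℝ) * (P ω * (y i (A i ω) (S i ω)
              * (if A i ω = a then 1 else 0) * piB α (d i) (S i ω) / f₂ i (A i ω) (S i ω))) := by
          intro ω
          rw [Finset.mul_sum, Finset.mul_sum]
          exact Finset.sum_congr rfl fun i _ => by ring
        rw [Finset.sum_congr rfl fun ω _ => step ω, Finset.sum_comm, Finset.mul_sum]
        exact Finset.sum_congr rfl fun i _ => (Finset.mul_sum _ _ _).symm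
    _ = (1 / n : ℝ) * ∑ i, ∑ s ∈ Finset.range (d i + 1), y i a s * piB α (d i) s := by
        rw [Finset.sum_congr rfl fun i _ => key i]
end

section
/- The IPW estimating equations are unbiased: with known propensity scores, for each component ν, E[ψ₀(Y_ν, A_ν, Z_ν; θ; α)] = 0 when θ_{0,α} = (1/k)·E[Σ_{i ∈ V(C_ν)} Σ_{a_N} y_{νi}(0, a_N) π(a_N; α)], where ψ₀(Y_ν,A_ν,Z_ν;θ;α) = (1/k) Σ_{i ∈ V(C_ν)} Y_{νi} 1{A_{νi}=0} π(A_{N_{νi}};α)/f(A_{νi}, A_{N_{νi}}|Z_{νi},Z_{N_{νi}}) − θ_{0,α}. -/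
open Finset

/-- Population average potential outcome ȳ(a,α). -/
noncomputable def ybarA (n : ℕ) (d : Fin n → ℕ)
    (y : (i : Fin n) → Bool → (Fin (d i) → Bool) → ℝ) (a : Bool) (α : ℝ) : ℝ :=
  (1 / n : ℝ) * ∑ i, ∑ v : Fin (d i) → Bool, y i a v * piN α v

/-- Marginal population average potential outcome ȳ(α). -/
noncomputable def ybarM (n : ℕ) (d : Fin n → ℕ)
    (y : (i : Fin n) → Bool → (Fin (d i) → Bool) → ℝ) (α : ℝ) : ℝ :=
  (1 / n : ℝ) * ∑ i, ∑ b : Bool, ∑ v : Fin (d i) → Bool, y i b v * piI α b * piN α v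

/-- The IPW estimating equation ψ₀ is unbiased: with known propensity scores, its
expectation is zero at the true parameter value θ₀α. -/
theorem estimating_equation_unbiased (nν : ℕ) (d : Fin nν → ℕ) (k : ℝ) (hk : 0 < k)
    (Ω : Type) [Fintype Ω] (P : Ω → ℝ) (hP : ∀ ω, 0 ≤ P ω) (hP1 : ∑ ω, P ω = 1)
    (A : Fin nν → Ω → Bool) (AN : (i : Fin nν) → Ω → (Fin (d i) → Bool))
    (f : (i : Fin nν) → Bool → (Fin (d i) → Bool) → ℝ)
    (hfpos : ∀ i b v, 0 < f i b v)
    (hmarg : ∀ (i : Fin nν) (b : Bool) (v : Fin (d i) → Bool),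
      ∑ ω ∈ Finset.univ.filter (fun ω => A i ω = b ∧ AN i ω = v), P ω = f i b v)
    (y : (i : Fin nν) → Bool → (Fin (d i) → Bool) → ℝ)
    (α : ℝ) (h0 : 0 ≤ α) (h1 : α ≤ 1)
    (θ : ℝ)
    (hθ : θ = (1 / k) * ∑ i, ∑ v : Fin (d i) → Bool, y i false v * piN α v) :
    ∑ ω, P ω * ((1 / k) * (∑ i, y i (A i ω) (AN i ω)
        * (if A i ω = false then 1 else 0) * piN α (AN i ω)
        / f i (A i ω) (AN i ω)) - θ) = 0 := by

  have key : ∀ i : Fin nν, (∑ ω, P ω * (y i (A i ω) (AN i ω)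
      * (if A i ω = false then 1 else 0) * piN α (AN i ω) / f i (A i ω) (AN i ω)))
      = ∑ v : Fin (d i) → Bool, y i false v * piN α v := by
    intro i
    have hfib := Finset.sum_fiberwise_of_maps_to
      (g := fun ω => (A i ω, AN i ω))
      (s := (Finset.univ : Finset Ω))
      (t := (Finset.univ : Finset (Bool × (Fin (d i) → Bool))))
      (fun ω _ => Finset.mem_univ _)
      (fun ω => P ω * (y i (A i ω) (AN i ω) * (if A i ω = false then 1 else 0)
        * piN α (AN i ω) / f i (A i ω) (AN i ω)))
    rw [← hfib]
    have step : ∀ p : Bool × (Fin (d i) → Bool),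
        (∑ ω ∈ Finset.univ.filter (fun ω => (A i ω, AN i ω) = p),
          P ω * (y i (A i ω) (AN i ω) * (if A i ω = false then 1 else 0)
            * piN α (AN i ω) / f i (A i ω) (AN i ω)))
        = f i p.1 p.2 * (y i p.1 p.2 * (if p.1 = false then 1 else 0)
            * piN α p.2 / f i p.1 p.2) := by
      intro p
      have : (∑ ω ∈ Finset.univ.filter (fun ω => (A i ω, AN i ω) = p),
          P ω * (y i (A i ω) (AN i ω) * (if A i ω = false then 1 else 0)
            * piN α (AN i ω) / f i (A i ω) (AN i ω)))
          = ∑ ω ∈ Finset.univ.filter (fun ω => (A i ω, AN i ω) = p),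
            P ω * (y i p.1 p.2 * (if p.1 = false then 1 else 0)
              * piN α p.2 / f i p.1 p.2) := by
        apply Finset.sum_congr rfl
        intro ω hω
        simp only [Finset.mem_filter, Prod.ext_iff] at hω
        rw [hω.2.1, hω.2.2]
      rw [this, ← Finset.sum_mul]
      congr 1
      rw [← hmarg i p.1 p.2]
      apply Finset.sum_congr
      · ext ω; simp [Prod.ext_iff]
      · intro ω _; rfl
    rw [Finset.sum_congr rfl (fun p _ => step p)]
    rw [Fintype.sum_prod_type]
    simp only [Fintype.sum_bool]
    simp only [zero_div, mul_zero, Finset.sum_const_zero, zero_add, if_true, mul_one]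
    have htz : (∑ x : Fin (d i) → Bool, f i true x * ((y i true x * if true = false then 1 else 0)
        * piN α x / f i true x)) = 0 := by simp
    rw [htz, zero_add]
    apply Finset.sum_congr rfl
    intro v _
    field_simp
    rw [mul_assoc]; exact mul_div_cancel_left₀ _ (hfpos i false v).ne'
  simp only [mul_sub, Finset.sum_sub_distrib, ← Finset.sum_mul, hP1, one_mul]
  have swap : (∑ ω, P ω * ((1 / k) * (∑ i, y i (A i ω) (AN i ω)
        * (if A i ω = false then 1 else 0) * piN α (AN i ω)
        / f i (A i ω) (AN i ω))))
      = (1 / k) * ∑ i, ∑ ω, P ω * (y i (A i ω) (AN i ω)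
        * (if A i ω = false then 1 else 0) * piN α (AN i ω) / f i (A i ω) (AN i ω)) := by
    calc (∑ ω, P ω * ((1 / k) * (∑ i, y i (A i ω) (AN i ω)
        * (if A i ω = false then 1 else 0) * piN α (AN i ω)
        / f i (A i ω) (AN i ω))))
        = ∑ ω, ∑ i, (1 / k) * (P ω * (y i (A i ω) (AN i ω)
          * (if A i ω = false then 1 else 0) * piN α (AN i ω) / f i (A i ω) (AN i ω))) := by
          apply Finset.sum_congr rfl
          intro ω _
          rw [Finset.mul_sum, Finset.mul_sum]
          apply Finset.sum_congr rfl
          intro j _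
          ring
      _ = (1 / k) * ∑ i, ∑ ω, P ω * (y i (A i ω) (AN i ω)
          * (if A i ω = false then 1 else 0) * piN α (AN i ω) / f i (A i ω) (AN i ω)) := by
          rw [Finset.sum_comm, Finset.mul_sum]
          apply Finset.sum_congr rfl
          intro j _
          rw [Finset.mul_sum]
  rw [swap, Finset.sum_congr rfl (fun i _ => key i), ← hθ, sub_self]
end
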